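/- arXiv:2109.15148 — 3 statements merged into one kernel-verified Lean document; each statement's English description precedes it below -/
import Mathlib

section
/- Every vertex of G_p has at least |S| − 1 neighbours; consequently, the number of edges of G_p is at least |S|·(|S| − 1)·p²/2. -/
/-- The set `S ⊆ F_p` of elements whose least nonnegative representative `k`
satisfies `1 ≤ k ≤ (p-5)/6` and `k ≡ 1 (mod 3)`. -/
def Svertex (p : ℕ) : Set (ZMod p) :=
  {x | 1 ≤ x.val ∧ x.val ≤ (p - 5) / 6 ∧ x.val % 3 = 1}

/-- The vertex set `V = S × F_p × F_p` of the graph `G_p`. -/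
def Vsub (p : ℕ) : Type :=
  {v : ZMod p × ZMod p × ZMod p // v.1 ∈ Svertex p}

/-- The graph `G_p` on `V = S × F_p × F_p`: distinct vertices `x, y` are adjacent iff
`x₂ + y₃ = x₁·y₁²` and `x₃ + y₂ = x₁²·y₁`. -/
def Gp (p : ℕ) : SimpleGraph (Vsub p) where
  Adj x y := x ≠ y ∧ x.val.2.1 + y.val.2.2 = x.val.1 * y.val.1 ^ 2 ∧
    x.val.2.2 + y.val.2.1 = x.val.1 ^ 2 * y.val.1
  symm := ⟨by
    rintro x y ⟨hne, h1, h2⟩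
    exact ⟨hne.symm, by linear_combination h2, by linear_combination h1⟩⟩
  loopless := ⟨fun x h => h.1 rfl⟩

theorem stmt_2 (p : ℕ) (hp : p.Prime) (h5 : p % 6 = 5) (h11 : 11 < p) :
    (∀ v : Vsub p, (Svertex p).ncard - 1 ≤ ((Gp p).neighborSet v).ncard) ∧
    (Svertex p).ncard * ((Svertex p).ncard - 1) * p ^ 2 / 2 ≤ ((Gp p).edgeSet).ncard := by
  classical
  haveI : NeZero p := ⟨by omega⟩
  haveI hfinV : Finite (Vsub p) := by unfold Vsub; infer_instance
  haveI : Fintype (Vsub p) := Fintype.ofFinite _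
  -- Part 1
  have key : ∀ v : Vsub p, (Svertex p).ncard - 1 ≤ ((Gp p).neighborSet v).ncard := by
    intro v
    set f : ZMod p → Vsub p := fun s =>
      if h : s ∈ Svertex p then
        ⟨(s, v.val.1 ^ 2 * s - v.val.2.2, v.val.1 * s ^ 2 - v.val.2.1), h⟩
      else v with hf
    have hmaps : ∀ s ∈ Svertex p \ {v.val.1}, f s ∈ (Gp p).neighborSet v := by
      rintro s ⟨hs, hs'⟩
      have hval : (f s).val = (s, v.val.1 ^ 2 * s - v.val.2.2, v.val.1 * s ^ 2 - v.val.2.1) := by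
        simp [hf, hs]
      refine ⟨?_, ?_, ?_⟩
      · intro h
        apply hs'
        have := congrArg (fun w : Vsub p => w.val.1) h
        simpa [hval] using this.symm
      · rw [hval]; ring
      · rw [hval]; ring
    have hinj : Set.InjOn f (Svertex p \ {v.val.1}) := by
      rintro s ⟨hs, _⟩ t ⟨ht, _⟩ h
      have := congrArg (fun w : Vsub p => w.val.1) h
      simpa [hf, hs, ht] using this
    have hle := Set.ncard_le_ncard_of_injOn f hmaps hinj (Set.toFinite _)
    have hd : (Svertex p \ {v.val.1}).ncard = (Svertex p).ncard - 1 :=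
      Set.ncard_diff_singleton_of_mem v.prop
    omega
  refine ⟨key, ?_⟩
  -- cardinality of the vertex type
  have e : Vsub p ≃ Svertex p × (ZMod p × ZMod p) :=
    { toFun := fun v => (⟨v.val.1, v.prop⟩, v.val.2)
      invFun := fun x => ⟨(x.1.1, x.2), x.1.2⟩
      left_inv := fun v => rfl
      right_inv := fun x => rfl }
  have hcardV : Fintype.card (Vsub p) = (Svertex p).ncard * p ^ 2 := by
    rw [← Nat.card_eq_fintype_card, Nat.card_congr e, Nat.card_prod, Nat.card_prod,
      Nat.card_coe_set_eq, Nat.card_eq_fintype_card, ZMod.card]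
    ring
  -- handshake
  have hsum := (Gp p).sum_degrees_eq_twice_card_edges
  have hdeg : ∀ v : Vsub p, (Svertex p).ncard - 1 ≤ (Gp p).degree v := by
    intro v
    have h : ((Gp p).neighborSet v).ncard = (Gp p).degree v := by
      rw [← SimpleGraph.card_neighborSet_eq_degree, ← Nat.card_coe_set_eq,
        Nat.card_eq_fintype_card]
    exact h ▸ key v
  have hlow : Fintype.card (Vsub p) * ((Svertex p).ncard - 1) ≤ ∑ v, (Gp p).degree v := by
    calc Fintype.card (Vsub p) * ((Svertex p).ncard - 1)
        = ∑ _v : Vsub p, ((Svertex p).ncard - 1) := by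
          rw [Finset.sum_const, Finset.card_univ, smul_eq_mul]
      _ ≤ ∑ v, (Gp p).degree v := Finset.sum_le_sum fun v _ => hdeg v
  have hedge : ((Gp p).edgeSet).ncard = (Gp p).edgeFinset.card := by
    rw [SimpleGraph.edgeFinset, ← Set.ncard_eq_toFinset_card']
  rw [hsum, hcardV] at hlow
  have : (Svertex p).ncard * ((Svertex p).ncard - 1) * p ^ 2 ≤ 2 * ((Gp p).edgeSet).ncard := by
    rw [hedge]
    calc (Svertex p).ncard * ((Svertex p).ncard - 1) * p ^ 2
        = (Svertex p).ncard * p ^ 2 * ((Svertex p).ncard - 1) := by ring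
      _ ≤ 2 * (Gp p).edgeFinset.card := hlow
  omega
end

section
/- Let a, b, c ∈ V be pairwise distinct and let x, y, z, w ∈ V be pairwise distinct such that ax, xw, by, yw, cz, zw are all edges of G_p. Then: (1) if a₁ = b₁ then a₂ ≠ b₂ and a₃ ≠ b₃; (2) if a₁ = c₁ then a₂ ≠ c₂ and a₃ ≠ c₃; (3) if b₁ = c₁ then b₂ ≠ c₂ and b₃ ≠ c₃. -/
lemma Svertex_sum_ne_zero (p : ℕ) (hp : p.Prime) (h11 : 11 < p)
    {u v : ZMod p} (hu : u ∈ Svertex p) (hv : v ∈ Svertex p) : u + v ≠ 0 := by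
  haveI : NeZero p := ⟨hp.ne_zero⟩
  intro h
  obtain ⟨hu1, hu2, -⟩ := hu
  obtain ⟨hv1, hv2, -⟩ := hv
  have hlt : u.val + v.val < p := by omega
  have hval : (u + v).val = 0 := by rw [h, ZMod.val_zero]
  rw [ZMod.val_add, Nat.mod_eq_of_lt hlt] at hval
  omega

/-- Two neighbors of a common vertex with equal first coordinates are equal. -/
lemma common_neighbor_eq (p : ℕ) {u v t : Vsub p}
    (hu : (Gp p).Adj u t) (hv : (Gp p).Adj v t) (h1 : u.val.1 = v.val.1) : u = v := by
  obtain ⟨-, e1, e2⟩ := hu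
  obtain ⟨-, e3, e4⟩ := hv
  apply Subtype.ext
  apply Prod.ext h1
  apply Prod.ext
  · exact add_right_cancel (by rw [e1, e3, h1] :
      u.val.2.1 + t.val.2.2 = v.val.2.1 + t.val.2.2)
  · exact add_right_cancel (by rw [e2, e4, h1] :
      u.val.2.2 + t.val.2.1 = v.val.2.2 + t.val.2.1)

/-- Key lemma: two vertices at distance 2 from `w` through distinct middle
vertices, with equal first coordinates, have distinct second and third coords. -/
lemma key_lemma (p : ℕ) (hp : p.Prime) (h11 : 11 < p)
    {a b x y w : Vsub p} (hab : a ≠ b) (hxy : x ≠ y)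
    (hax : (Gp p).Adj a x) (hxw : (Gp p).Adj x w)
    (hby : (Gp p).Adj b y) (hyw : (Gp p).Adj y w)
    (h1 : a.val.1 = b.val.1) :
    a.val.2.1 ≠ b.val.2.1 ∧ a.val.2.2 ≠ b.val.2.2 := by
  haveI : Fact p.Prime := ⟨hp⟩
  -- if x₁ = y₁ then x = y
  have hxyne : x.val.1 ≠ y.val.1 := fun h =>
    hxy (common_neighbor_eq p hxw hyw h)
  have hxy0 : x.val.1 - y.val.1 ≠ 0 := sub_ne_zero_of_ne hxyne
  -- if a₁ = w₁ then a = w, hence b₁ = w₁, hence b = w, hence a = b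
  have hawne : a.val.1 ≠ w.val.1 := by
    intro h
    have haw : a = w := common_neighbor_eq p hax hxw.symm h
    have hbw : b = w := common_neighbor_eq p hby hyw.symm (h1 ▸ h)
    exact hab (haw.trans hbw.symm)
  have haw0 : a.val.1 - w.val.1 ≠ 0 := sub_ne_zero_of_ne hawne
  have hxyS : x.val.1 + y.val.1 ≠ 0 := Svertex_sum_ne_zero p hp h11 x.2 y.2
  have hawS : a.val.1 + w.val.1 ≠ 0 := Svertex_sum_ne_zero p hp h11 a.2 w.2
  obtain ⟨-, e1, e2⟩ := hax
  obtain ⟨-, e3, e4⟩ := hxw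
  obtain ⟨-, e5, e6⟩ := hby
  obtain ⟨-, e7, e8⟩ := hyw
  constructor
  · intro h2
    have key : (a.val.1 - w.val.1) * ((x.val.1 - y.val.1) * (x.val.1 + y.val.1)) = 0 := by
      linear_combination -e1 + e5 + e4 - e8 - y.val.1 ^ 2 * h1 + h2
    rcases mul_eq_zero.mp key with h | h
    · exact haw0 h
    · rcases mul_eq_zero.mp h with h | h
      · exact hxy0 h
      · exact hxyS h
  · intro h3
    have key : (x.val.1 - y.val.1) * ((a.val.1 - w.val.1) * (a.val.1 + w.val.1)) = 0 := by
      linear_combination -e2 + e6 + e3 - e7 + h3 - y.val.1 * (a.val.1 + b.val.1) * h1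
    rcases mul_eq_zero.mp key with h | h
    · exact hxy0 h
    · rcases mul_eq_zero.mp h with h | h
      · exact haw0 h
      · exact hawS h

theorem stmt_3 (p : ℕ) (hp : p.Prime) (h5 : p % 6 = 5) (h11 : 11 < p)
    (a b c x y z w : Vsub p)
    (habc : [a, b, c].Pairwise (· ≠ ·))
    (hxyzw : [x, y, z, w].Pairwise (· ≠ ·))
    (hax : (Gp p).Adj a x) (hxw : (Gp p).Adj x w)
    (hby : (Gp p).Adj b y) (hyw : (Gp p).Adj y w)
    (hcz : (Gp p).Adj c z) (hzw : (Gp p).Adj z w) :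
    (a.val.1 = b.val.1 → a.val.2.1 ≠ b.val.2.1 ∧ a.val.2.2 ≠ b.val.2.2) ∧
    (a.val.1 = c.val.1 → a.val.2.1 ≠ c.val.2.1 ∧ a.val.2.2 ≠ c.val.2.2) ∧
    (b.val.1 = c.val.1 → b.val.2.1 ≠ c.val.2.1 ∧ b.val.2.2 ≠ c.val.2.2) := by
  simp only [List.pairwise_cons, List.mem_cons, List.not_mem_nil] at habc hxyzw
  obtain ⟨hab', hbc', -⟩ := habc
  obtain ⟨hxy', hyz', -⟩ := hxyzw
  refine ⟨key_lemma p hp h11 (hab' b (Or.inl rfl)) (hxy' y (Or.inl rfl)) hax hxw hby hyw,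
    key_lemma p hp h11 (hab' c (Or.inr (Or.inl rfl))) (hxy' z (Or.inr (Or.inl rfl)))
      hax hxw hcz hzw,
    key_lemma p hp h11 (hbc' c (Or.inl rfl)) (hyz' z (Or.inl rfl)) hby hyw hcz hzw⟩
end

section
/- The graph G_q contains no copy of the theta graph θ_{4,3}: there do not exist pairwise distinct vertices a, b, u, v, w, x, y, z, d, e, f ∈ F_q⁴ such that au, uv, vw, wb, ax, xy, yz, zb, ad, de, ef, fb are all edges of G_q. -/
/-- The graph `G_q` on `F_q⁴`: distinct vertices `u, v` are adjacent iff
`u₂ + v₂ = u₁·v₁`, `u₃ + v₄ = u₁·v₁²` and `u₄ + v₃ = u₁²·v₁`. -/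
def Gq (F : Type*) [Field F] : SimpleGraph (F × F × F × F) where
  Adj u v := u ≠ v ∧ u.2.1 + v.2.1 = u.1 * v.1 ∧
    u.2.2.1 + v.2.2.2 = u.1 * v.1 ^ 2 ∧ u.2.2.2 + v.2.2.1 = u.1 ^ 2 * v.1
  symm := by
    constructor
    rintro u v ⟨hne, h1, h2, h3⟩
    exact ⟨hne.symm, by linear_combination h1, by linear_combination h3,
      by linear_combination h2⟩
  loopless := ⟨fun u h => h.1 rfl⟩

section helpers

variable {F : Type*} [Field F]

private lemma nbr_a (a1 a2 a3 a4 p1 p2 p3 p4 q1 q2 q3 q4 : F)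
    (hp1 : a2 + p2 = a1*p1) (hp2 : a3 + p4 = a1*p1^2) (hp3 : a4 + p3 = a1^2*p1)
    (hq1 : a2 + q2 = a1*q1) (hq2 : a3 + q4 = a1*q1^2) (hq3 : a4 + q3 = a1^2*q1)
    (h : p1 = q1) : (p1,p2,p3,p4) = ((q1,q2,q3,q4) : F × F × F × F) := by
  subst h
  obtain rfl : p2 = q2 := by linear_combination hp1 - hq1
  obtain rfl : p3 = q3 := by linear_combination hp3 - hq3
  obtain rfl : p4 = q4 := by linear_combination hp2 - hq2
  rfl

private lemma nbr_b (b1 b2 b3 b4 p1 p2 p3 p4 q1 q2 q3 q4 : F)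
    (hp1 : p2 + b2 = p1*b1) (hp2 : p3 + b4 = p1*b1^2) (hp3 : p4 + b3 = p1^2*b1)
    (hq1 : q2 + b2 = q1*b1) (hq2 : q3 + b4 = q1*b1^2) (hq3 : q4 + b3 = q1^2*b1)
    (h : p1 = q1) : (p1,p2,p3,p4) = ((q1,q2,q3,q4) : F × F × F × F) := by
  subst h
  obtain rfl : p2 = q2 := by linear_combination hp1 - hq1
  obtain rfl : p3 = q3 := by linear_combination hp2 - hq2
  obtain rfl : p4 = q4 := by linear_combination hp3 - hq3
  rfl

private lemma rdist (a1 b1 c1 c3 s r t s' t' : F) (hD : a1 ≠ b1)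
    (e1 : t*(b1-r)+s*(r-a1) = c1) (e3 : t*(b1^2-r^2)+s*(r^2-a1^2) = c3)
    (e1' : t'*(b1-r)+s'*(r-a1) = c1) (e3' : t'*(b1^2-r^2)+s'*(r^2-a1^2) = c3)
    (hs : s ≠ s') (ht : t ≠ t') : False := by
  have hDne : b1 - a1 ≠ 0 := sub_ne_zero.mpr (Ne.symm hD)
  have h1 : (t-t')*(b1-r) + (s-s')*(r-a1) = 0 := by linear_combination e1 - e1'
  have h3 : (t-t')*(b1-r)*(b1+r) + (s-s')*(r-a1)*(a1+r) = 0 := by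
    linear_combination e3 - e3'
  have h4 : (b1-a1)*((t-t')*(b1-r)) = 0 := by linear_combination h3 - (a1+r)*h1
  have h5 : (b1-a1)*((s-s')*(r-a1)) = 0 := by linear_combination (b1+r)*h1 - h3
  have hbr : b1 - r = 0 := by
    rcases mul_eq_zero.mp h4 with h | h
    · exact absurd h hDne
    · rcases mul_eq_zero.mp h with h | h
      · exact absurd (sub_eq_zero.mp h) ht
      · exact h
  have hra : r - a1 = 0 := by
    rcases mul_eq_zero.mp h5 with h | h
    · exact absurd h hDne
    · rcases mul_eq_zero.mp h with h | h
      · exact absurd (sub_eq_zero.mp h) hs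
      · exact h
  exact hD (by linear_combination -hbr - hra)

private lemma quad (a1 b1 c1 c2 c3 s r t : F)
    (e1 : t*(b1-r)+s*(r-a1) = c1)
    (e2 : t^2*(b1-r)+s^2*(r-a1) = c2)
    (e3 : t*(b1^2-r^2)+s*(r^2-a1^2) = c3) :
    (a1*c1^2 - b1*c1^2 + a1^2*c2 - 2*a1*b1*c2 + b1^2*c2) * r^2
    + (b1^2*c1^2 - a1^2*c1^2 - b1^3*c2 + a1*b1^2*c2 + a1^2*b1*c2 - a1^3*c2) * r
    + (b1*c3^2 - a1*c3^2 - 2*b1^2*c1*c3 + 2*a1^2*c1*c3 + b1^3*c1^2 - a1^3*c1^2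
       + a1*b1^3*c2 - 2*a1^2*b1^2*c2 + a1^3*b1*c2) = 0 := by
  linear_combination
    ((a1+r)*(r-a1)*(c3-(a1+r)*c1+(b1-a1)*t*(b1-r))
      - (b1+r)*(b1-r)*((b1+r)*c1-c3+(b1-a1)*s*(r-a1))) * e1
    + ((b1-a1)^2*(b1-r)*(r-a1)) * e2
    + (-((r-a1)*(c3-(a1+r)*c1+(b1-a1)*t*(b1-r)))
       + (b1-r)*((b1+r)*c1-c3+(b1-a1)*s*(r-a1))) * e3

private lemma three_roots (A B C r1 r2 r3 : F)
    (h1 : A*r1^2 + B*r1 + C = 0) (h2 : A*r2^2 + B*r2 + C = 0)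
    (h3 : A*r3^2 + B*r3 + C = 0)
    (hr12 : r1 ≠ r2) (hr13 : r1 ≠ r3) (hr23 : r2 ≠ r3) :
    A = 0 ∧ B = 0 ∧ C = 0 := by
  have h12 : (r1-r2)*(A*(r1+r2)+B) = 0 := by linear_combination h1 - h2
  have h13 : (r1-r3)*(A*(r1+r3)+B) = 0 := by linear_combination h1 - h3
  have hAB1 : A*(r1+r2)+B = 0 :=
    (mul_eq_zero.mp h12).resolve_left (sub_ne_zero.mpr hr12)
  have hAB2 : A*(r1+r3)+B = 0 :=
    (mul_eq_zero.mp h13).resolve_left (sub_ne_zero.mpr hr13)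
  have hA' : A*(r2-r3) = 0 := by linear_combination hAB1 - hAB2
  have hA : A = 0 := (mul_eq_zero.mp hA').resolve_right (sub_ne_zero.mpr hr23)
  have hB : B = 0 := by linear_combination hAB1 - (r1+r2)*hA
  exact ⟨hA, hB, by linear_combination h1 - r1^2*hA - r1*hB⟩

private lemma main_alg (two_ne : (2:F) ≠ 0)
    (a1 b1 c1 c2 c3 s1 r1 t1 s2 r2 t2 s3 r3 t3 : F)
    (e11 : t1*(b1-r1)+s1*(r1-a1) = c1)
    (e12 : t1^2*(b1-r1)+s1^2*(r1-a1) = c2)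
    (e13 : t1*(b1^2-r1^2)+s1*(r1^2-a1^2) = c3)
    (e21 : t2*(b1-r2)+s2*(r2-a1) = c1)
    (e22 : t2^2*(b1-r2)+s2^2*(r2-a1) = c2)
    (e23 : t2*(b1^2-r2^2)+s2*(r2^2-a1^2) = c3)
    (e31 : t3*(b1-r3)+s3*(r3-a1) = c1)
    (e32 : t3^2*(b1-r3)+s3^2*(r3-a1) = c2)
    (e33 : t3*(b1^2-r3^2)+s3*(r3^2-a1^2) = c3)
    (hs12 : s1 ≠ s2) (hs13 : s1 ≠ s3) (hs23 : s2 ≠ s3)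
    (ht12 : t1 ≠ t2) (ht13 : t1 ≠ t3) (ht23 : t2 ≠ t3)
    (hne : a1 = b1 → c1 = 0 → c2 = 0 → c3 = 0 → False) : False := by
  rcases eq_or_ne a1 b1 with hD | hD
  · -- the case a₁ = b₁
    subst hD
    have k11 : (t1-s1)*(a1-r1) = c1 := by linear_combination e11
    have k12 : (t1+s1)*((t1-s1)*(a1-r1)) = c2 := by linear_combination e12
    have k13 : ((t1-s1)*(a1-r1))*(a1+r1) = c3 := by linear_combination e13
    have k21 : (t2-s2)*(a1-r2) = c1 := by linear_combination e21
    have k22 : (t2+s2)*((t2-s2)*(a1-r2)) = c2 := by linear_combination e22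
    have k23 : ((t2-s2)*(a1-r2))*(a1+r2) = c3 := by linear_combination e23
    by_cases hc1 : c1 = 0
    · refine hne rfl hc1 ?_ ?_
      · rw [← k12, k11, hc1, mul_zero]
      · rw [← k13, k11, hc1, zero_mul]
    · have m1 : c1*(a1+r1) = c3 := by linear_combination k13 - (a1+r1)*k11
      have m2 : c1*(a1+r2) = c3 := by linear_combination k23 - (a1+r2)*k21
      have hrr : c1*(r1-r2) = 0 := by linear_combination m1 - m2
      have hr : r1 = r2 :=
        sub_eq_zero.mp ((mul_eq_zero.mp hrr).resolve_left hc1)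
      rw [← hr] at k21 k22
      have har : a1 - r1 ≠ 0 := fun h => hc1 (by rw [← k11, h, mul_zero])
      have hdiff : ((t1-s1)-(t2-s2))*(a1-r1) = 0 := by linear_combination k11 - k21
      have hdiff' : t1-s1 = t2-s2 :=
        sub_eq_zero.mp ((mul_eq_zero.mp hdiff).resolve_right har)
      rw [k11] at k12
      rw [k21] at k22
      have hsum : ((t1+s1)-(t2+s2))*c1 = 0 := by linear_combination k12 - k22
      have hsum' : t1+s1 = t2+s2 :=
        sub_eq_zero.mp ((mul_eq_zero.mp hsum).resolve_right hc1)
      exact ht12 (mul_left_cancel₀ two_ne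
        (by linear_combination hsum' + hdiff' : (2:F)*t1 = 2*t2))
  · -- the case a₁ ≠ b₁
    have hDne : b1 - a1 ≠ 0 := sub_ne_zero.mpr (Ne.symm hD)
    have hr12 : r1 ≠ r2 := by
      intro h; rw [← h] at e21 e23
      exact rdist a1 b1 c1 c3 s1 r1 t1 s2 t2 hD e11 e13 e21 e23 hs12 ht12
    have hr13 : r1 ≠ r3 := by
      intro h; rw [← h] at e31 e33
      exact rdist a1 b1 c1 c3 s1 r1 t1 s3 t3 hD e11 e13 e31 e33 hs13 ht13
    have hr23 : r2 ≠ r3 := by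
      intro h; rw [← h] at e31 e33
      exact rdist a1 b1 c1 c3 s2 r2 t2 s3 t3 hD e21 e23 e31 e33 hs23 ht23
    obtain ⟨hA, hB, hC⟩ := three_roots _ _ _ r1 r2 r3
      (quad a1 b1 c1 c2 c3 s1 r1 t1 e11 e12 e13)
      (quad a1 b1 c1 c2 c3 s2 r2 t2 e21 e22 e23)
      (quad a1 b1 c1 c2 c3 s3 r3 t3 e31 e32 e33) hr12 hr13 hr23
    have hQa : (b1-a1)*((a1+b1)*c1 - c3)^2 = 0 := by
      linear_combination a1^2*hA + a1*hB + hC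
    have hc3 : (a1+b1)*c1 - c3 = 0 :=
      sq_eq_zero_iff.mp ((mul_eq_zero.mp hQa).resolve_left hDne)
    have ht1 : (b1-r1)*((b1-a1)*t1 - c1) = 0 := by
      linear_combination e13 - (a1+r1)*e11 - hc3
    have ht2 : (b1-r2)*((b1-a1)*t2 - c1) = 0 := by
      linear_combination e23 - (a1+r2)*e21 - hc3
    have ht3 : (b1-r3)*((b1-a1)*t3 - c1) = 0 := by
      linear_combination e33 - (a1+r3)*e31 - hc3
    have tcon : ∀ ti tj : F, (b1-a1)*ti - c1 = 0 → (b1-a1)*tj - c1 = 0 → ti = tj :=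
      fun ti tj hi hj => sub_eq_zero.mp
        ((mul_eq_zero.mp (by linear_combination hi - hj : (b1-a1)*(ti-tj) = 0)).resolve_left hDne)
    have rcon : ∀ ri rj : F, b1 - ri = 0 → b1 - rj = 0 → ri = rj :=
      fun ri rj hi hj => by linear_combination hj - hi
    rcases mul_eq_zero.mp ht1 with h1 | h1 <;>
      rcases mul_eq_zero.mp ht2 with h2 | h2 <;>
        rcases mul_eq_zero.mp ht3 with h3 | h3
    · exact hr12 (rcon _ _ h1 h2)
    · exact hr12 (rcon _ _ h1 h2)
    · exact hr13 (rcon _ _ h1 h3)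
    · exact ht23 (tcon _ _ h2 h3)
    · exact hr23 (rcon _ _ h2 h3)
    · exact ht13 (tcon _ _ h1 h3)
    · exact ht12 (tcon _ _ h1 h2)
    · exact ht12 (tcon _ _ h1 h2)

end helpers

theorem stmt_12 (F : Type*) [Field F] [Fintype F] (hodd : Odd (Fintype.card F)) :
    ¬ ∃ a b u v w x y z d e f : F × F × F × F,
      [a, b, u, v, w, x, y, z, d, e, f].Pairwise (· ≠ ·) ∧
      (Gq F).Adj a u ∧ (Gq F).Adj u v ∧ (Gq F).Adj v w ∧ (Gq F).Adj w b ∧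
      (Gq F).Adj a x ∧ (Gq F).Adj x y ∧ (Gq F).Adj y z ∧ (Gq F).Adj z b ∧
      (Gq F).Adj a d ∧ (Gq F).Adj d e ∧ (Gq F).Adj e f ∧ (Gq F).Adj f b := by
  have two_ne : (2:F) ≠ 0 := by
    refine Ring.two_ne_zero fun h => ?_
    have := FiniteField.even_card_of_char_two h
    obtain ⟨k, hk⟩ := hodd
    omega
  rintro ⟨a, b, u, v, w, x, y, z, d, e, f, hpw,
    hau, huv, hvw, hwb, hax, hxy, hyz, hzb, had, hde, hef, hfb⟩
  simp only [List.pairwise_cons] at hpw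
  have hab : a ≠ b := hpw.1 b (by simp)
  have hux : u ≠ x := hpw.2.2.1 x (by simp)
  have hud : u ≠ d := hpw.2.2.1 d (by simp)
  have hxd : x ≠ d := hpw.2.2.2.2.2.1 d (by simp)
  have hwz : w ≠ z := hpw.2.2.2.2.1 z (by simp)
  have hwf : w ≠ f := hpw.2.2.2.2.1 f (by simp)
  have hzf : z ≠ f := hpw.2.2.2.2.2.2.2.1 f (by simp)
  obtain ⟨a1, a2, a3, a4⟩ := a
  obtain ⟨b1, b2, b3, b4⟩ := b
  obtain ⟨u1, u2, u3, u4⟩ := u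
  obtain ⟨v1, v2, v3, v4⟩ := v
  obtain ⟨w1, w2, w3, w4⟩ := w
  obtain ⟨x1, x2, x3, x4⟩ := x
  obtain ⟨y1, y2, y3, y4⟩ := y
  obtain ⟨z1, z2, z3, z4⟩ := z
  obtain ⟨d1, d2, d3, d4⟩ := d
  obtain ⟨e1, e2, e3, e4⟩ := e
  obtain ⟨f1, f2, f3, f4⟩ := f
  obtain ⟨-, hau1, hau2, hau3⟩ := hau
  obtain ⟨-, huv1, huv2, huv3⟩ := huv
  obtain ⟨-, hvw1, hvw2, hvw3⟩ := hvw
  obtain ⟨-, hwb1, hwb2, hwb3⟩ := hwb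
  obtain ⟨-, hax1, hax2, hax3⟩ := hax
  obtain ⟨-, hxy1, hxy2, hxy3⟩ := hxy
  obtain ⟨-, hyz1, hyz2, hyz3⟩ := hyz
  obtain ⟨-, hzb1, hzb2, hzb3⟩ := hzb
  obtain ⟨-, had1, had2, had3⟩ := had
  obtain ⟨-, hde1, hde2, hde3⟩ := hde
  obtain ⟨-, hef1, hef2, hef3⟩ := hef
  obtain ⟨-, hfb1, hfb2, hfb3⟩ := hfb
  dsimp only at hax1 hax2 hax3 hxy1 hxy2 hxy3 hyz1 hyz2 hyz3 hzb1 hzb2 hzb3 had1 had2 had3 hde1 hde2 hde3 hef1 hef2 hef3 hfb1 hfb2 hfb3 hau1 hau2 hau3 huv1 huv2 huv3 hvw1 hvw2 hvw3 hwb1 hwb2 hwb3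
  -- first coordinates of the first internal vertices are distinct
  have hs12 : u1 ≠ x1 := fun h =>
    hux (nbr_a a1 a2 a3 a4 u1 u2 u3 u4 x1 x2 x3 x4 hau1 hau2 hau3 hax1 hax2 hax3 h)
  have hs13 : u1 ≠ d1 := fun h =>
    hud (nbr_a a1 a2 a3 a4 u1 u2 u3 u4 d1 d2 d3 d4 hau1 hau2 hau3 had1 had2 had3 h)
  have hs23 : x1 ≠ d1 := fun h =>
    hxd (nbr_a a1 a2 a3 a4 x1 x2 x3 x4 d1 d2 d3 d4 hax1 hax2 hax3 had1 had2 had3 h)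
  have ht12 : w1 ≠ z1 := fun h =>
    hwz (nbr_b b1 b2 b3 b4 w1 w2 w3 w4 z1 z2 z3 z4 hwb1 hwb2 hwb3 hzb1 hzb2 hzb3 h)
  have ht13 : w1 ≠ f1 := fun h =>
    hwf (nbr_b b1 b2 b3 b4 w1 w2 w3 w4 f1 f2 f3 f4 hwb1 hwb2 hwb3 hfb1 hfb2 hfb3 h)
  have ht23 : z1 ≠ f1 := fun h =>
    hzf (nbr_b b1 b2 b3 b4 z1 z2 z3 z4 f1 f2 f3 f4 hzb1 hzb2 hzb3 hfb1 hfb2 hfb3 h)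
  refine main_alg two_ne a1 b1 (b2-a2) (b3-a3) (b4-a4) u1 v1 w1 x1 y1 z1 d1 e1 f1
    (by linear_combination hau1 - huv1 + hvw1 - hwb1)
    (by linear_combination hau2 - huv3 + hvw2 - hwb3)
    (by linear_combination hau3 - huv2 + hvw3 - hwb2)
    (by linear_combination hax1 - hxy1 + hyz1 - hzb1)
    (by linear_combination hax2 - hxy3 + hyz2 - hzb3)
    (by linear_combination hax3 - hxy2 + hyz3 - hzb2)
    (by linear_combination had1 - hde1 + hef1 - hfb1)
    (by linear_combination had2 - hde3 + hef2 - hfb3)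
    (by linear_combination had3 - hde2 + hef3 - hfb2)
    hs12 hs13 hs23 ht12 ht13 ht23 ?_
  intro h1 hc1 hc2 hc3
  apply hab
  have : a2 = b2 := by linear_combination -hc1
  have : a3 = b3 := by linear_combination -hc2
  have : a4 = b4 := by linear_combination -hc3
  simp_all
end
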